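/- If a Hilbert–Schmidt operator T on ℓ²(ℕ) satisfies ⟨α|T|α⟩ = 0 for all coherent vectors |α⟩, α ∈ ℂ, then T = 0. -/

import Mathlib

open scoped InnerProductSpace

noncomputable def coherent {H : Type*} [NormedAddCommGroup H] [InnerProductSpace ℂ H]
    (e : ℕ → H) (α : ℂ) : H :=
  ∑' k : ℕ, (Complex.exp (-(‖α‖^2 : ℝ) / 2) * α^k / (Real.sqrt (Nat.factorial k) : ℂ)) • e k


/-- If `∑ dₙ xⁿ = 0` for all `x ∈ (0,1]` and the coefficients are absolutely
summable, then all coefficients vanish. -/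
lemma coeff_zero_of_tsum_zero' (d : ℕ → ℂ) (hd : Summable fun n => ‖d n‖)
    (h : ∀ x : ℝ, 0 < x → x ≤ 1 → ∑' n, d n * (x : ℂ) ^ n = 0) :
    ∀ n, d n = 0 := by
  intro m
  induction m using Nat.strong_induction_on with
  | _ m ih =>
  set C : ℝ := ∑' i, ‖d (i + (m + 1))‖ with hC
  have hdtail : Summable fun i => ‖d (i + (m + 1))‖ := by
    exact hd.comp_injective fun a b h => by omega
  have hCnn : 0 ≤ C := tsum_nonneg fun i => norm_nonneg _
  have key : ∀ x : ℝ, 0 < x → x ≤ 1 → ‖d m‖ * x ^ m ≤ C * x ^ (m + 1) := by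
    intro x hx hx1
    have hxn : ∀ n : ℕ, ‖d n * (x : ℂ) ^ n‖ ≤ ‖d n‖ * x ^ n := by
      intro n
      rw [norm_mul, norm_pow, Complex.norm_real]
      gcongr
      rw [Real.norm_eq_abs, abs_of_pos hx]
    have hsum : Summable fun n => d n * (x : ℂ) ^ n := by
      refine Summable.of_norm_bounded (hd.mul_right 1) fun n => ?_
      calc ‖d n * (x : ℂ) ^ n‖ ≤ ‖d n‖ * x ^ n := hxn n
        _ ≤ ‖d n‖ * 1 := by
            gcongr
            exact pow_le_one₀ hx.le hx1
    have hsplit := Summable.sum_add_tsum_nat_add (f := fun n => d n * (x : ℂ) ^ n) (m + 1) hsum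
    have hzero := h x hx hx1
    have hhead : ∑ i ∈ Finset.range (m + 1), d i * (x : ℂ) ^ i = d m * (x : ℂ) ^ m := by
      rw [Finset.sum_range_succ]
      have : ∑ i ∈ Finset.range m, d i * (x : ℂ) ^ i = 0 := by
        apply Finset.sum_eq_zero
        intro i hi
        rw [ih i (Finset.mem_range.mp hi), zero_mul]
      rw [this, zero_add]
    have heq : d m * (x : ℂ) ^ m = -∑' i, d (i + (m + 1)) * (x : ℂ) ^ (i + (m + 1)) := by
      have := hsplit
      rw [hhead, hzero] at this
      linear_combination this
    have hnorm : ‖d m‖ * x ^ m ≤ ∑' i, ‖d (i + (m + 1))‖ * x ^ (i + (m + 1)) := by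
      calc ‖d m‖ * x ^ m = ‖d m * (x : ℂ) ^ m‖ := by
            rw [norm_mul, norm_pow, Complex.norm_real, Real.norm_eq_abs, abs_of_pos hx]
        _ = ‖∑' i, d (i + (m + 1)) * (x : ℂ) ^ (i + (m + 1))‖ := by rw [heq, norm_neg]
        _ ≤ ∑' i, ‖d (i + (m + 1)) * (x : ℂ) ^ (i + (m + 1))‖ := norm_tsum_le_tsum_norm
              (by
                refine Summable.of_nonneg_of_le (fun i => norm_nonneg _) (fun i => hxn _) ?_
                refine Summable.of_nonneg_of_le (fun i => by positivity) (fun i => ?_)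
                    (hdtail.mul_right 1)
                calc ‖d (i + (m+1))‖ * x ^ (i + (m+1)) ≤ ‖d (i + (m+1))‖ * 1 := by
                      gcongr; exact pow_le_one₀ hx.le hx1
                  _ = ‖d (i + (m+1))‖ * 1 := rfl)
        _ ≤ ∑' i, ‖d (i + (m + 1))‖ * x ^ (i + (m + 1)) := by
            refine Summable.tsum_le_tsum (fun i => hxn _) ?_ ?_
            · refine Summable.of_nonneg_of_le (fun i => norm_nonneg _) (fun i => hxn _) ?_
              refine Summable.of_nonneg_of_le (fun i => by positivity) (fun i => ?_)
                  (hdtail.mul_right 1)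
              calc ‖d (i + (m+1))‖ * x ^ (i + (m+1)) ≤ ‖d (i + (m+1))‖ * 1 := by
                    gcongr; exact pow_le_one₀ hx.le hx1
                _ = ‖d (i + (m+1))‖ * 1 := rfl
            · refine Summable.of_nonneg_of_le (fun i => by positivity) (fun i => ?_)
                  (hdtail.mul_right 1)
              calc ‖d (i + (m+1))‖ * x ^ (i + (m+1)) ≤ ‖d (i + (m+1))‖ * 1 := by
                    gcongr; exact pow_le_one₀ hx.le hx1
                _ = ‖d (i + (m+1))‖ * 1 := rfl
    calc ‖d m‖ * x ^ m ≤ ∑' i, ‖d (i + (m + 1))‖ * x ^ (i + (m + 1)) := hnorm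
      _ ≤ ∑' i, ‖d (i + (m + 1))‖ * x ^ (m + 1) := by
          refine Summable.tsum_le_tsum (fun i => ?_) ?_ (hdtail.mul_right _)
          · exact mul_le_mul_of_nonneg_left
              (pow_le_pow_of_le_one hx.le hx1 (by omega)) (norm_nonneg _)
          · refine Summable.of_nonneg_of_le (fun i => by positivity) (fun i => ?_)
                (hdtail.mul_right 1)
            calc ‖d (i + (m+1))‖ * x ^ (i + (m+1)) ≤ ‖d (i + (m+1))‖ * 1 := by
                  gcongr; exact pow_le_one₀ hx.le hx1
              _ = ‖d (i + (m+1))‖ * 1 := rfl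
      _ = C * x ^ (m + 1) := by rw [hC, tsum_mul_right]
  have hlin : ∀ x : ℝ, 0 < x → x ≤ 1 → ‖d m‖ ≤ C * x := by
    intro x hx hx1
    have := key x hx hx1
    have hxm : (0:ℝ) < x ^ m := pow_pos hx m
    rw [pow_succ'] at this
    -- ‖d m‖ * x^m ≤ C * (x * x^m)
    nlinarith [this]
  by_contra hne
  have hpos : 0 < ‖d m‖ := norm_pos_iff.mpr hne
  set x := min 1 (‖d m‖ / (2 * (C + 1))) with hx
  have hxpos : 0 < x := lt_min one_pos (by positivity)
  have hx1 : x ≤ 1 := min_le_left _ _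
  have := hlin x hxpos hx1
  have hxle : x ≤ ‖d m‖ / (2 * (C + 1)) := min_le_right _ _
  have hfin : ‖d m‖ ≤ C * (‖d m‖ / (2 * (C + 1))) := le_trans this (by nlinarith)
  have h2 : (0:ℝ) < 2 * (C + 1) := by positivity
  have hlt : C * (‖d m‖ / (2 * (C + 1))) < ‖d m‖ := by
    have he : C * (‖d m‖ / (2 * (C + 1))) = C * ‖d m‖ / (2 * (C + 1)) := by ring
    rw [he, div_lt_iff₀ h2]
    nlinarith
  linarith

open Polynomial in
lemma antidiag_coeff_zero' (n : ℕ) (c : ℕ × ℕ → ℂ)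
    (hd : ∀ s : ℝ, ∑ p ∈ Finset.HasAntidiagonal.antidiagonal n,
      c p * (1 - s * Complex.I) ^ p.1 * (1 + s * Complex.I) ^ p.2 = 0) :
    ∀ p ∈ Finset.HasAntidiagonal.antidiagonal n, c p = 0 := by
  set q : Polynomial ℂ := ∑ p ∈ Finset.HasAntidiagonal.antidiagonal n, C (c p) * X ^ p.2 with hqdef
  have hne : ∀ s : ℝ, (1 - (s : ℂ) * Complex.I) ≠ 0 := by
    intro s h
    have := congrArg Complex.re h
    simp [Complex.sub_re, Complex.one_re, Complex.mul_re] at this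
  have heval : ∀ s : ℝ, q.eval ((1 + s * Complex.I) / (1 - s * Complex.I)) = 0 := by
    intro s
    have h0 := hd s
    have hmul : (1 - (s:ℂ) * Complex.I) ^ n
          * q.eval ((1 + s * Complex.I) / (1 - s * Complex.I))
        = ∑ p ∈ Finset.HasAntidiagonal.antidiagonal n,
            c p * (1 - s * Complex.I) ^ p.1 * (1 + s * Complex.I) ^ p.2 := by
      rw [hqdef, Polynomial.eval_finset_sum, Finset.mul_sum]
      refine Finset.sum_congr rfl fun p hp => ?_
      have hpn : p.1 + p.2 = n := Finset.HasAntidiagonal.mem_antidiagonal.mp hp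
      have hps : (1 - (s:ℂ) * Complex.I) ^ n
          = (1 - (s:ℂ) * Complex.I) ^ p.1 * (1 - (s:ℂ) * Complex.I) ^ p.2 := by
        rw [← pow_add, hpn]
      simp only [Polynomial.eval_mul, Polynomial.eval_C, Polynomial.eval_pow, Polynomial.eval_X]
      rw [div_pow, hps]
      have h2 : (1 - (s:ℂ) * Complex.I) ^ p.2 ≠ 0 := pow_ne_zero _ (hne s)
      field_simp
    rw [h0] at hmul
    exact (mul_eq_zero.mp hmul).resolve_left (pow_ne_zero n (hne s))
  have hq : q = 0 := by
    apply Polynomial.eq_zero_of_infinite_isRoot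
    apply Set.infinite_of_injective_forall_mem
      (f := fun s : ℝ => (1 + (s:ℂ) * Complex.I) / (1 - (s:ℂ) * Complex.I))
    case hi =>
      intro s t hst
      simp only at hst
      rw [div_eq_div_iff (hne s) (hne t)] at hst
      have := congrArg Complex.im hst
      simp [Complex.add_im, Complex.mul_im, Complex.mul_re, Complex.sub_re,
        Complex.sub_im] at this
      linarith
    case hf => exact heval
  intro p hp
  have hc : q.coeff p.2 = c p := by
    rw [hqdef, Polynomial.finset_sum_coeff]
    rw [Finset.sum_eq_single_of_mem p hp]
    · simp
    · intro p' hp' hne'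
      have h2 : p'.2 ≠ p.2 := by
        intro h22
        apply hne'
        have h1 := Finset.HasAntidiagonal.mem_antidiagonal.mp hp
        have h1' := Finset.HasAntidiagonal.mem_antidiagonal.mp hp'
        exact Prod.ext (by omega) h22
      simp only [Polynomial.coeff_C_mul, Polynomial.coeff_X_pow]
      rw [if_neg (fun hh => h2 hh.symm), mul_zero]
  rw [hq] at hc
  simpa using hc.symm


lemma summable_pow_div_sqrt_factorial' (r : ℝ) (hr : 0 ≤ r) :
    Summable fun k : ℕ => r ^ k / Real.sqrt (Nat.factorial k) := by
  have hb : Summable fun k : ℕ =>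
      ((2 * r ^ 2) ^ k / (Nat.factorial k) + (1 / 2 : ℝ) ^ k) / 2 :=
    ((Real.summable_pow_div_factorial (2 * r ^ 2)).add summable_geometric_two).div_const 2
  refine Summable.of_nonneg_of_le (fun k => by positivity) (fun k => ?_) hb
  have hfac : (0:ℝ) < (Nat.factorial k : ℝ) := by positivity
  set a : ℝ := (2 * r ^ 2) ^ k / (Nat.factorial k) with ha
  set bb : ℝ := (1 / 2 : ℝ) ^ k with hbb
  have hann : 0 ≤ a := by positivity
  have hbnn : 0 ≤ bb := by positivity
  have h1 : r ^ k / Real.sqrt (Nat.factorial k) = Real.sqrt (a * bb) := by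
    have hab : a * bb = (r ^ k) ^ 2 / (Nat.factorial k) := by
      rw [ha, hbb, mul_pow, div_pow]
      field_simp
      ring
    rw [hab, Real.sqrt_div (by positivity : (0:ℝ) ≤ (r ^ k) ^ 2),
      Real.sqrt_sq (by positivity : (0:ℝ) ≤ r ^ k)]
  rw [h1]
  have hle : a * bb ≤ ((a + bb) / 2) ^ 2 := by nlinarith [sq_nonneg (a - bb)]
  calc Real.sqrt (a * bb) ≤ Real.sqrt (((a + bb) / 2) ^ 2) := Real.sqrt_le_sqrt hle
    _ = (a + bb) / 2 := Real.sqrt_sq (by positivity)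

/-- Group a summable double series over `ℕ × ℕ` by antidiagonals. -/
lemma tsum_antidiagonal_eq' {f : ℕ × ℕ → ℂ} (hf : Summable f) :
    ∑' p : ℕ × ℕ, f p = ∑' n : ℕ, ∑ p ∈ Finset.HasAntidiagonal.antidiagonal n, f p := by
  rw [← Finset.HasAntidiagonal.sigmaAntidiagonalEquivProd.tsum_eq f]
  rw [Summable.tsum_sigma' (f := fun c => f (Finset.HasAntidiagonal.sigmaAntidiagonalEquivProd c))
    (fun n => Summable.of_finite) ((Finset.HasAntidiagonal.sigmaAntidiagonalEquivProd.summable_iff).mpr hf)]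
  refine tsum_congr fun n => ?_
  rw [← Finset.tsum_subtype]
  exact tsum_congr fun p => rfl

lemma summable_antidiagonal_of_summable' {f : ℕ × ℕ → ℝ} (hf : Summable f) :
    Summable fun n : ℕ => ∑ p ∈ Finset.HasAntidiagonal.antidiagonal n, f p := by
  have h1 : Summable fun x : Σ n : ℕ, Finset.HasAntidiagonal.antidiagonal n => f x.2 :=
    (Finset.HasAntidiagonal.sigmaAntidiagonalEquivProd.summable_iff (f := f)).mpr hf
  have h2 := h1.sigma
  refine h2.congr fun n => ?_
  exact Finset.tsum_subtype _ _

set_option maxHeartbeats 2000000 in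
theorem husimi_vanishing_implies_zero {H : Type*} [NormedAddCommGroup H]
    [InnerProductSpace ℂ H] [CompleteSpace H] (b : HilbertBasis ℕ ℂ H)
    (T : H →L[ℂ] H) (hHS : Summable (fun k : ℕ => ‖T (b k)‖^2))
    (h : ∀ α : ℂ, ⟪coherent (fun k => b k) α, T (coherent (fun k => b k) α)⟫_ℂ = 0) :
    T = 0 := by
  classical
  set g : ℂ → ℕ → ℂ := fun α k =>
    Complex.exp (-(‖α‖^2 : ℝ) / 2) * α ^ k / (Real.sqrt (Nat.factorial k) : ℂ) with hg
  have hsqrt_pos : ∀ k : ℕ, (0:ℝ) < Real.sqrt (Nat.factorial k) := fun k =>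
    Real.sqrt_pos.mpr (by positivity)
  have hexp : ∀ α : ℂ, Complex.exp (-(‖α‖^2 : ℝ) / 2)
      = ((Real.exp (-‖α‖^2 / 2) : ℝ) : ℂ) := by
    intro α
    rw [Complex.ofReal_exp]
    norm_cast
  have hgnorm : ∀ (α : ℂ) (k : ℕ),
      ‖g α k‖ = Real.exp (-‖α‖^2 / 2) * ‖α‖ ^ k / Real.sqrt (Nat.factorial k) := by
    intro α k
    rw [hg]
    simp only [hexp α, norm_div, norm_mul, norm_pow, Complex.norm_real, Real.norm_eq_abs,
      abs_of_pos (Real.exp_pos _), abs_of_pos (hsqrt_pos k)]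
  have Sg : ∀ α : ℂ, Summable fun k => ‖g α k‖ := by
    intro α
    refine ((summable_pow_div_sqrt_factorial' ‖α‖ (norm_nonneg α)).mul_left
      (Real.exp (-‖α‖^2 / 2))).congr fun k => ?_
    rw [hgnorm α k]
    ring
  have ScohH : ∀ α : ℂ, Summable fun k => g α k • (b k : H) := by
    intro α
    refine Summable.of_norm ?_
    refine ((Sg α).congr fun k => ?_)
    rw [norm_smul, b.orthonormal.1 k, mul_one]
  have hcoh : ∀ α : ℂ, coherent (fun k => b k) α = ∑' k, g α k • (b k : H) := fun α => rfl
  have hib : ∀ (α : ℂ) (j : ℕ), ⟪(b j : H), coherent (fun k => b k) α⟫_ℂ = g α j := by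
    intro α j
    rw [hcoh, ← innerSL_apply_apply (𝕜 := ℂ), ContinuousLinearMap.map_tsum _ (ScohH α)]
    rw [tsum_eq_single j]
    · simp only [innerSL_apply_apply, inner_smul_right]
      rw [orthonormal_iff_ite.mp b.orthonormal]
      simp
    · intro k hk
      simp only [innerSL_apply_apply, inner_smul_right]
      rw [orthonormal_iff_ite.mp b.orthonormal]
      simp [Ne.symm hk]
  have STb : ∀ α : ℂ, Summable fun k => g α k • T (b k) := by
    intro α
    refine Summable.of_norm_bounded ((Sg α).mul_right ‖T‖) fun k => ?_
    rw [norm_smul]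
    have hb1 : ‖T (b k)‖ ≤ ‖T‖ := by simpa [b.orthonormal.1 k] using T.le_opNorm (b k)
    exact mul_le_mul_of_nonneg_left hb1 (norm_nonneg _)
  have hTcoh : ∀ α : ℂ, T (coherent (fun k => b k) α) = ∑' k, g α k • T (b k) := by
    intro α
    rw [hcoh, ContinuousLinearMap.map_tsum _ (ScohH α)]
    simp only [map_smul]
  have hibT : ∀ (α : ℂ) (j : ℕ), ⟪(b j : H), T (coherent (fun k => b k) α)⟫_ℂ
      = ∑' k, g α k * ⟪(b j : H), T (b k)⟫_ℂ := by
    intro α j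
    rw [hTcoh, ← innerSL_apply_apply (𝕜 := ℂ), ContinuousLinearMap.map_tsum _ (STb α)]
    simp only [innerSL_apply_apply, inner_smul_right]
  have hTbound : ∀ j k : ℕ, ‖⟪(b j : H), T (b k)⟫_ℂ‖ ≤ ‖T‖ := by
    intro j k
    have h1 := norm_inner_le_norm (𝕜 := ℂ) (b j : H) (T (b k))
    have h2 : ‖T (b k)‖ ≤ ‖T‖ := by simpa [b.orthonormal.1 k] using T.le_opNorm (b k)
    rw [b.orthonormal.1 j, one_mul] at h1
    exact h1.trans h2
  set F : ℂ → ℕ × ℕ → ℂ := fun α p =>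
    (starRingEnd ℂ) (g α p.1) * (g α p.2 * ⟪(b p.1 : H), T (b p.2)⟫_ℂ) with hF
  have SFnorm : ∀ α : ℂ, Summable fun p : ℕ × ℕ => ‖F α p‖ := by
    intro α
    have hprod : Summable fun p : ℕ × ℕ => ‖g α p.1‖ * (‖g α p.2‖ * ‖T‖) :=
      (Sg α).mul_of_nonneg ((Sg α).mul_right ‖T‖) (fun k => norm_nonneg _)
        (fun k => by positivity)
    refine Summable.of_nonneg_of_le (fun p => norm_nonneg _) (fun p => ?_) hprod
    rw [hF]
    simp only [norm_mul, RCLike.norm_conj]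
    gcongr
    exact hTbound _ _
  have SF : ∀ α : ℂ, Summable (F α) := fun α => (SFnorm α).of_norm
  have hdouble : ∀ α : ℂ, ∑' p : ℕ × ℕ, F α p = 0 := by
    intro α
    rw [Summable.tsum_prod' (SF α) (fun j => (SF α).prod_factor j)]
    have hrow : ∀ j : ℕ, ∑' k, F α (j, k)
        = (starRingEnd ℂ) (g α j) * ⟪(b j : H), T (coherent (fun k => b k) α)⟫_ℂ := by
      intro j
      rw [hibT α j, ← tsum_mul_left]
    rw [tsum_congr hrow]
    have h2 : ∀ j : ℕ, (starRingEnd ℂ) (g α j)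
        = ⟪coherent (fun k => b k) α, (b j : H)⟫_ℂ := by
      intro j
      rw [← inner_conj_symm, hib α j]
    calc ∑' j, (starRingEnd ℂ) (g α j) * ⟪(b j : H), T (coherent (fun k => b k) α)⟫_ℂ
        = ∑' j, ⟪coherent (fun k => b k) α, (b j : H)⟫_ℂ
            * ⟪(b j : H), T (coherent (fun k => b k) α)⟫_ℂ :=
          tsum_congr fun j => by rw [h2]
      _ = ⟪coherent (fun k => b k) α, T (coherent (fun k => b k) α)⟫_ℂ :=
          b.tsum_inner_mul_inner _ _
      _ = 0 := h α
  set cc : ℕ × ℕ → ℂ := fun p => ⟪(b p.1 : H), T (b p.2)⟫_ℂ /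
      ((Real.sqrt (Nat.factorial p.1) : ℂ) * (Real.sqrt (Nat.factorial p.2) : ℂ)) with hcc
  have hsqrtC : ∀ k : ℕ, ((Real.sqrt (Nat.factorial k) : ℝ) : ℂ) ≠ 0 := fun k =>
    Complex.ofReal_ne_zero.mpr (hsqrt_pos k).ne'
  have hFcc : ∀ (α : ℂ) (p : ℕ × ℕ), F α p = ((Real.exp (-‖α‖^2 / 2) : ℝ) : ℂ) ^ 2 *
      (cc p * (starRingEnd ℂ) α ^ p.1 * α ^ p.2) := by
    intro α p
    rw [hF, hcc, hg]
    simp only [hexp α, map_div₀, map_mul, map_pow, Complex.conj_ofReal]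
    field_simp
  have hEne : ∀ α : ℂ, (((Real.exp (-‖α‖^2 / 2) : ℝ) : ℂ)) ^ 2 ≠ 0 := fun α =>
    pow_ne_zero _ (Complex.ofReal_ne_zero.mpr (Real.exp_pos _).ne')
  have hS : ∀ α : ℂ, ∑' p : ℕ × ℕ, (cc p * (starRingEnd ℂ) α ^ p.1 * α ^ p.2) = 0 := by
    intro α
    have h0 := hdouble α
    rw [tsum_congr (fun p => hFcc α p), tsum_mul_left] at h0
    exact (mul_eq_zero.mp h0).resolve_left (hEne α)
  have SccNorm : ∀ α : ℂ,
      Summable fun p : ℕ × ℕ => ‖cc p * (starRingEnd ℂ) α ^ p.1 * α ^ p.2‖ := by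
    intro α
    refine ((SFnorm α).div_const (Real.exp (-‖α‖^2 / 2) ^ 2)).congr fun p => ?_
    rw [hFcc α p, norm_mul, norm_pow, Complex.norm_real, Real.norm_eq_abs,
      abs_of_pos (Real.exp_pos _)]
    rw [mul_comm, mul_div_assoc]
    rw [div_self (by positivity : (Real.exp (-‖α‖^2 / 2) ^ 2 : ℝ) ≠ 0), mul_one]
  have Scc : ∀ α : ℂ, Summable fun p : ℕ × ℕ => cc p * (starRingEnd ℂ) α ^ p.1 * α ^ p.2 :=
    fun α => (SccNorm α).of_norm
  set D : ℝ → ℕ → ℂ := fun s n => ∑ p ∈ Finset.HasAntidiagonal.antidiagonal n,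
      cc p * (1 - (s : ℂ) * Complex.I) ^ p.1 * (1 + (s : ℂ) * Complex.I) ^ p.2 with hD
  have hconj1 : ∀ s : ℝ, (starRingEnd ℂ) (1 + (s : ℂ) * Complex.I)
      = 1 - (s : ℂ) * Complex.I := by
    intro s
    simp [map_add, map_mul, Complex.conj_ofReal, Complex.conj_I]
    ring
  have hDsum : ∀ s : ℝ, Summable fun n => ‖D s n‖ := by
    intro s
    have h1 := SccNorm (1 + (s : ℂ) * Complex.I)
    have h2 := summable_antidiagonal_of_summable' h1
    refine Summable.of_nonneg_of_le (fun n => norm_nonneg _) (fun n => ?_) h2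
    rw [hD]
    refine (norm_sum_le _ _).trans ?_
    refine Finset.sum_le_sum fun p hp => ?_
    rw [hconj1 s]
  have hDx : ∀ s x : ℝ, 0 < x → x ≤ 1 → ∑' n, D s n * (x : ℂ) ^ n = 0 := by
    intro s x _ _
    set α : ℂ := (x : ℂ) * (1 + (s : ℂ) * Complex.I) with hα
    have hconjα : (starRingEnd ℂ) α = (x : ℂ) * (1 - (s : ℂ) * Complex.I) := by
      rw [hα, map_mul, Complex.conj_ofReal, hconj1 s]
    have h0 := hS α
    rw [tsum_antidiagonal_eq' (Scc α)] at h0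
    rw [← h0]
    refine tsum_congr fun n => ?_
    rw [hD, Finset.sum_mul]
    refine Finset.sum_congr rfl fun p hp => ?_
    have hpn : p.1 + p.2 = n := Finset.HasAntidiagonal.mem_antidiagonal.mp hp
    rw [hconjα, hα, mul_pow, mul_pow, ← hpn, pow_add]
    ring
  have hDzero : ∀ (s : ℝ) (n : ℕ), D s n = 0 := fun s =>
    coeff_zero_of_tsum_zero' (D s) (hDsum s) (hDx s)
  have hcczero : ∀ p : ℕ × ℕ, cc p = 0 := by
    intro p
    refine antidiag_coeff_zero' (p.1 + p.2) cc (fun s => ?_) p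
      (Finset.HasAntidiagonal.mem_antidiagonal.mpr rfl)
    have := hDzero s (p.1 + p.2)
    rw [hD] at this
    exact this
  have hinner0 : ∀ j k : ℕ, ⟪(b j : H), T (b k)⟫_ℂ = 0 := by
    intro j k
    have h0 := hcczero (j, k)
    rw [hcc] at h0
    exact (div_eq_zero_iff.mp h0).resolve_right (mul_ne_zero (hsqrtC j) (hsqrtC k))
  have hTb : ∀ k : ℕ, T (b k) = 0 := by
    intro k
    have hrepr : b.repr (T (b k)) = 0 := by
      ext j
      rw [b.repr_apply_apply]
      simp [hinner0 j k]
    exact b.repr.map_eq_zero_iff.mp hrepr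
  ext x
  have h1 := (b.hasSum_repr x).mapL T
  have h2 : (fun k => T (b.repr x k • b k)) = fun _ : ℕ => (0 : H) := by
    funext k
    rw [map_smul, hTb k, smul_zero]
  rw [h2] at h1
  simpa using h1.unique hasSum_zero
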